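/- Let q be a prime power, let 𝔽_q be the finite field with q elements, and let K be a finite field with q² elements equipped with an 𝔽_q-algebra structure. Let F ∈ 𝔽_q[x,y,z] be a homogeneous polynomial of degree d with d ≤ q + 4 such that: (i) F vanishes at every nonzero triple (a,b,c) ∈ 𝔽_q³ (the curve C = {F = 0} is plane-filling); (ii) C is smooth at every 𝔽_q-point, i.e., for every nonzero (a,b,c) ∈ 𝔽_q³ the three partial derivatives of F do not all vanish at (a,b,c); and (iii) no nonzero homogeneous polynomial of degree 1 over 𝔽_q divides F. Then C is smooth at every 𝔽_{q²}-point: there is no nonzero triple (a,b,c) ∈ K³ at which F (with coefficients mapped into K) and all three of its partial derivatives vanish simultaneously. -/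

import Mathlib

open MvPolynomial
namespace PFC



lemma degree_sum_of_isHomogeneous {σ R : Type*} [CommSemiring R] {F : MvPolynomial σ R} {d : ℕ}
    (hF : F.IsHomogeneous d) {m : σ →₀ ℕ} (hm : MvPolynomial.coeff m F ≠ 0) :
    ∑ i ∈ m.support, m i = d := by
  have h := hF hm
  rwa [show (Finsupp.weight 1 : (_ →₀ ℕ) →+ ℕ) = Finsupp.degree from Finsupp.degree_eq_weight_one.symm, Finsupp.degree_apply] at h

lemma eval₂_mul_scale {σ R S : Type*} [CommSemiring R] [CommSemiring S]
    (f : R →+* S) {F : MvPolynomial σ R} {d : ℕ} (hF : F.IsHomogeneous d)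
    (t : S) (g : σ → S) :
    eval₂ f (fun i => t * g i) F = t ^ d * eval₂ f g F := by
  rw [eval₂_eq, eval₂_eq, Finset.mul_sum]
  apply Finset.sum_congr rfl
  intro m hm
  rw [mem_support_iff] at hm
  have hdeg : ∑ i ∈ m.support, m i = d := degree_sum_of_isHomogeneous hF hm
  calc f (coeff m F) * ∏ i ∈ m.support, (t * g i) ^ m i
      = f (coeff m F) * ((∏ i ∈ m.support, t ^ m i) * ∏ i ∈ m.support, g i ^ m i) := by
        rw [← Finset.prod_mul_distrib]; simp_rw [mul_pow]
    _ = t ^ d * (f (coeff m F) * ∏ i ∈ m.support, g i ^ m i) := by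
        rw [Finset.prod_pow_eq_pow_sum, hdeg]; ring

lemma sub_aeval_mem {R : Type*} [CommRing R] {n : ℕ} (g : Fin n → MvPolynomial (Fin n) R)
    (I : Ideal (MvPolynomial (Fin n) R)) (hI : ∀ i, X i - g i ∈ I) (p : MvPolynomial (Fin n) R) :
    p - aeval g p ∈ I := by
  induction p using MvPolynomial.induction_on with
  | C c => simp only [aeval_C, algebraMap_eq, sub_self]; exact I.zero_mem
  | add p q hp hq =>
      have h := I.add_mem hp hq
      have : p + q - aeval g (p + q) = p - aeval g p + (q - aeval g q) := by
        rw [map_add]; ring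
      rw [this]; exact h
  | mul_X p i hp =>
      have : p * X i - aeval g (p * X i) = p * (X i - g i) + (p - aeval g p) * g i := by
        rw [map_mul, aeval_X]; ring
      rw [this]
      exact I.add_mem (I.mul_mem_left _ (hI i)) (I.mul_mem_right _ hp)

lemma pderiv_isHomogeneous {σ R : Type*} [CommSemiring R] [DecidableEq σ]
    {F : MvPolynomial σ R} {d : ℕ} (hF : F.IsHomogeneous d) (i : σ) :
    (pderiv i F).IsHomogeneous (d - 1) := by
  conv_lhs => rw [← F.support_sum_monomial_coeff]
  rw [map_sum]
  apply MvPolynomial.IsHomogeneous.sum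
  intro m hm
  rw [MvPolynomial.pderiv_monomial]
  rcases eq_or_ne (m i) 0 with h0 | h0
  · rw [h0]; norm_num; exact MvPolynomial.isHomogeneous_zero _ _ _
  · apply MvPolynomial.isHomogeneous_monomial
    rw [mem_support_iff] at hm
    have hd : m.degree = d := by
      have := degree_sum_of_isHomogeneous hF hm
      rwa [Finsupp.degree]
    have hsum : (m - fun₀ | i => 1) + (fun₀ | i => 1) = m := by
      ext j
      classical
      rcases eq_or_ne j i with rfl | hji
      · simp only [Finsupp.coe_add, Pi.add_apply, Finsupp.coe_tsub, Pi.sub_apply,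
          Finsupp.single_eq_same]
        omega
      · simp [Finsupp.single_eq_of_ne' (Ne.symm hji)]
    have hdeg1 : (fun₀ | i => 1 : σ →₀ ℕ).degree = 1 := by
      simp [Finsupp.degree_apply, Finsupp.support_single_ne_zero i one_ne_zero]
    have hadd : (m - fun₀ | i => 1).degree + (fun₀ | i => 1 : σ →₀ ℕ).degree = m.degree := by
      rw [Finsupp.degree_eq_weight_one, ← map_add, hsum]
    omega


/-- substitution `Xᵢ ↦ Aᵢ + Bᵢ * t` into `Polynomial S`. -/
noncomputable def lsub {R S : Type*} [CommSemiring R] [CommSemiring S] (f : R →+* S)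
    (A B : Fin 3 → S) (p : MvPolynomial (Fin 3) R) : Polynomial S :=
  eval₂ (Polynomial.C.comp f) (fun i => Polynomial.C (A i) + Polynomial.C (B i) * Polynomial.X) p

variable {R S : Type*} [CommSemiring R] [CommSemiring S] (f : R →+* S) (A B : Fin 3 → S)

lemma lsub_add (p q : MvPolynomial (Fin 3) R) :
    lsub f A B (p + q) = lsub f A B p + lsub f A B q := eval₂_add _ _

lemma lsub_mul_X (p : MvPolynomial (Fin 3) R) (i : Fin 3) :
    lsub f A B (p * X i)
      = Polynomial.C (A i) * lsub f A B p + Polynomial.C (B i) * (lsub f A B p * Polynomial.X) := by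
  simp only [lsub, eval₂_mul, eval₂_X]
  ring

lemma lsub_coeff_zero_one (p : MvPolynomial (Fin 3) R) :
    (lsub f A B p).coeff 0 = eval₂ f A p ∧
    (lsub f A B p).coeff 1 = ∑ i, B i * eval₂ f A (pderiv i p) := by
  induction p using MvPolynomial.induction_on with
  | C c =>
      constructor
      · simp [lsub, eval₂_C]
      · simp [lsub, eval₂_C]
  | add p q hp hq =>
      constructor
      · rw [lsub_add, Polynomial.coeff_add, hp.1, hq.1, eval₂_add]
      · rw [lsub_add, Polynomial.coeff_add, hp.2, hq.2, ← Finset.sum_add_distrib]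
        apply Finset.sum_congr rfl
        intro i _
        rw [map_add, eval₂_add]
        ring
  | mul_X p i hp =>
      constructor
      · rw [lsub_mul_X]
        simp only [Polynomial.coeff_add, Polynomial.coeff_C_mul, Polynomial.coeff_mul_X_zero,
          hp.1, mul_zero, add_zero, eval₂_mul, eval₂_X]
        ring
      · rw [lsub_mul_X]
        simp only [Polynomial.coeff_add, Polynomial.coeff_C_mul, Polynomial.coeff_mul_X,
          hp.1, hp.2]
        have hrhs : ∀ j, B j * eval₂ f A (pderiv j (p * X i))
            = B j * eval₂ f A (pderiv j p) * A i
              + (if j = i then B i * eval₂ f A p else 0) := by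
          intro j
          rcases eq_or_ne j i with rfl | hji
          · rw [pderiv_mul, pderiv_X, if_pos rfl]
            simp only [Pi.single_eq_same, map_one, mul_one, eval₂_add, eval₂_mul, eval₂_X,
              eval₂_one]
            ring
          · rw [pderiv_mul, pderiv_X, if_neg hji]
            rw [Pi.single_eq_of_ne (Ne.symm hji)]
            simp only [map_zero, mul_zero, add_zero, eval₂_add, eval₂_mul, eval₂_X, eval₂_zero]
            ring
        rw [Finset.sum_congr rfl (fun j _ => hrhs j), Finset.sum_add_distrib,
          Finset.sum_ite_eq' Finset.univ i (fun _ => B i * eval₂ f A p)]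
        simp only [Finset.mem_univ, if_pos]
        rw [← Finset.sum_mul]
        ring

lemma natDegree_lin_le (a b : S) :
    (Polynomial.C a + Polynomial.C b * Polynomial.X).natDegree ≤ 1 := by
  refine le_trans (Polynomial.natDegree_add_le _ _) ?_
  simp only [Polynomial.natDegree_C, max_le_iff]
  exact ⟨Nat.zero_le _,
    le_trans (Polynomial.natDegree_C_mul_le _ _) Polynomial.natDegree_X_le⟩

lemma natDegree_lin_pow_le (a b : S) (k : ℕ) :
    ((Polynomial.C a + Polynomial.C b * Polynomial.X) ^ k).natDegree ≤ k := by
  refine le_trans (Polynomial.natDegree_pow_le) ?_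
  have h1 := natDegree_lin_le a b
  calc k * (Polynomial.C a + Polynomial.C b * Polynomial.X).natDegree ≤ k * 1 :=
        Nat.mul_le_mul_left k h1
    _ = k := mul_one k

lemma lsub_monomial (m : Fin 3 →₀ ℕ) (cm : R) :
    lsub f A B (monomial m cm)
      = Polynomial.C (f cm) * ∏ i ∈ m.support,
          (Polynomial.C (A i) + Polynomial.C (B i) * Polynomial.X) ^ m i := by
  rw [lsub, eval₂_monomial]
  rfl

lemma natDegree_lsub_le {p : MvPolynomial (Fin 3) R} {d : ℕ} (hp : p.IsHomogeneous d) :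
    (lsub f A B p).natDegree ≤ d := by
  conv_lhs => rw [← p.support_sum_monomial_coeff]
  rw [lsub, eval₂_sum]
  apply Polynomial.natDegree_sum_le_of_forall_le
  intro m hm
  rw [← lsub, lsub_monomial]
  refine le_trans (Polynomial.natDegree_mul_le) ?_
  simp only [Polynomial.natDegree_C, zero_add]
  refine le_trans (Polynomial.natDegree_prod_le _ _) ?_
  rw [mem_support_iff] at hm
  have hle : ∑ i ∈ m.support,
        ((Polynomial.C (A i) + Polynomial.C (B i) * Polynomial.X) ^ m i).natDegree
      ≤ ∑ i ∈ m.support, m i :=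
    Finset.sum_le_sum (fun i _ => natDegree_lin_pow_le (A i) (B i) (m i))
  exact hle.trans (le_of_eq (degree_sum_of_isHomogeneous hp hm))

lemma reflect_lin (a b : S) :
    ((Polynomial.C a + Polynomial.C b * Polynomial.X)).reflect 1
      = Polynomial.C b + Polynomial.C a * Polynomial.X := by
  ext n
  rw [Polynomial.coeff_reflect]
  match n with
  | 0 => simp [Polynomial.revAt_le]
  | 1 => simp [Polynomial.revAt_le]
  | (k+2) =>
      rw [Polynomial.revAt_eq_self_of_lt (by omega)]
      simp only [Polynomial.coeff_add, Polynomial.coeff_C, Polynomial.coeff_C_mul,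
        Polynomial.coeff_X]
      norm_num

lemma reflect_lin_pow (a b : S) (k : ℕ) :
    ((Polynomial.C a + Polynomial.C b * Polynomial.X) ^ k).reflect k
      = (Polynomial.C b + Polynomial.C a * Polynomial.X) ^ k := by
  induction k with
  | zero => simp
  | succ k ih =>
      rw [pow_succ,
        Polynomial.reflect_mul _ _ (natDegree_lin_pow_le a b k) (natDegree_lin_le a b),
        ih, reflect_lin, pow_succ]

lemma reflect_finset_sum {ι : Type*} (s : Finset ι) (g : ι → Polynomial S) (N : ℕ) :
    (∑ i ∈ s, g i).reflect N = ∑ i ∈ s, (g i).reflect N := by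
  induction s using Finset.cons_induction with
  | empty => simp
  | cons a s ha ih => rw [Finset.sum_cons, Finset.sum_cons, Polynomial.reflect_add, ih]

lemma reflect_lin_prod (s : Finset (Fin 3)) (n : Fin 3 → ℕ) :
    (∏ i ∈ s, (Polynomial.C (A i) + Polynomial.C (B i) * Polynomial.X) ^ n i).reflect
        (∑ i ∈ s, n i)
      = ∏ i ∈ s, (Polynomial.C (B i) + Polynomial.C (A i) * Polynomial.X) ^ n i := by
  induction s using Finset.cons_induction with
  | empty => simp
  | cons a s ha ih =>
      rw [Finset.prod_cons, Finset.prod_cons, Finset.sum_cons,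
        Polynomial.reflect_mul _ _ (natDegree_lin_pow_le _ _ _)
          (le_trans (Polynomial.natDegree_prod_le _ _)
            (Finset.sum_le_sum (fun i _ => natDegree_lin_pow_le _ _ _))),
        reflect_lin_pow, ih]

lemma reflect_lsub {p : MvPolynomial (Fin 3) R} {d : ℕ} (hp : p.IsHomogeneous d) :
    (lsub f A B p).reflect d = lsub f B A p := by
  conv_lhs => rw [← p.support_sum_monomial_coeff]
  conv_rhs => rw [← p.support_sum_monomial_coeff]
  rw [lsub, lsub, eval₂_sum, eval₂_sum, reflect_finset_sum]
  apply Finset.sum_congr rfl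
  intro m hm
  rw [mem_support_iff] at hm
  rw [← lsub, ← lsub, lsub_monomial, lsub_monomial, Polynomial.reflect_C_mul]
  congr 1
  have hd : ∑ i ∈ m.support, m i = d := degree_sum_of_isHomogeneous hp hm
  rw [← hd]
  exact reflect_lin_prod A B m.support _





lemma fixed_of_pow {Fq K : Type*} [Field Fq] [Fintype Fq] [Field K] [Fintype K] [Algebra Fq K]
    {q : ℕ} (hq : Fintype.card Fq = q) {x : K} (hx : x ^ q = x) :
    ∃ α : Fq, algebraMap Fq K α = x := by
  classical
  have hq2 : 2 ≤ q := hq ▸ Fintype.one_lt_card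
  set φ := algebraMap Fq K
  set pKX : Polynomial K := Polynomial.X ^ q - Polynomial.X with hpKX
  have hpne : pKX ≠ 0 := by
    intro h0
    have : pKX.coeff q = 0 := by rw [h0]; simp
    rw [hpKX] at this
    have h1q : ¬ ((1 : ℕ) = q) := by omega
    simp only [Polynomial.coeff_sub, Polynomial.coeff_X_pow, if_pos rfl, Polynomial.coeff_X,
      if_neg h1q] at this
    norm_num at this
  have hdeg : pKX.natDegree ≤ q := by
    refine le_trans (Polynomial.natDegree_sub_le _ _) ?_
    simp only [Polynomial.natDegree_X_pow, Polynomial.natDegree_X, max_le_iff]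
    omega
  set S : Finset K := Finset.univ.image φ with hS
  have hcardS : S.card = q := by
    rw [hS, Finset.card_image_of_injective _ (algebraMap Fq K).injective, Finset.card_univ, hq]
  have hroot : ∀ y ∈ S, y ∈ pKX.roots.toFinset := by
    intro y hy
    rw [hS, Finset.mem_image] at hy
    obtain ⟨α, -, rfl⟩ := hy
    rw [Multiset.mem_toFinset, Polynomial.mem_roots hpne]
    show Polynomial.eval (φ α) pKX = 0
    rw [hpKX]
    simp only [Polynomial.eval_sub, Polynomial.eval_pow, Polynomial.eval_X]
    rw [← map_pow]
    rw [show α ^ q = α by rw [← hq]; exact FiniteField.pow_card α]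
    ring
  have hsub : S ⊆ pKX.roots.toFinset := hroot
  have hcard2 : pKX.roots.toFinset.card ≤ q := by
    refine le_trans (Multiset.toFinset_card_le _) (le_trans (Polynomial.card_roots' pKX) hdeg)
  have heq : pKX.roots.toFinset = S :=
    (Finset.eq_of_subset_of_card_le hsub (by omega)).symm
  have hxmem : x ∈ pKX.roots.toFinset := by
    rw [Multiset.mem_toFinset, Polynomial.mem_roots hpne]
    show Polynomial.eval x pKX = 0
    rw [hpKX]; simp [hx]
  rw [heq, hS, Finset.mem_image] at hxmem
  obtain ⟨α, -, hα⟩ := hxmem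
  exact ⟨α, hα⟩

lemma card_powers {K : Type*} [Field K] [Fintype K] [DecidableEq K] {q : ℕ} (hq2 : 2 ≤ q)
    (hK : Fintype.card K = q ^ 2) :
    q + 1 ≤ ((Finset.univ.filter (fun s : K => s ≠ 0)).image (fun s : K => s ^ (q - 1))).card := by
  set s0 : Finset K := Finset.univ.filter (fun s : K => s ≠ 0) with hs0
  have hcards0 : s0.card = q ^ 2 - 1 := by
    rw [hs0, Finset.filter_ne', Finset.card_erase_of_mem (Finset.mem_univ 0),
      Finset.card_univ, hK]
  have hfib : ∀ b ∈ s0.image (fun s : K => s ^ (q - 1)),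
      (s0.filter (fun a => a ^ (q - 1) = b)).card ≤ q - 1 := by
    intro b _
    set pb : Polynomial K := Polynomial.X ^ (q - 1) - Polynomial.C b with hpb
    have hpbne : pb ≠ 0 := Polynomial.X_pow_sub_C_ne_zero (by omega) b
    have hsub : s0.filter (fun a => a ^ (q - 1) = b) ⊆ pb.roots.toFinset := by
      intro a ha
      rw [Finset.mem_filter] at ha
      rw [Multiset.mem_toFinset, Polynomial.mem_roots hpbne]
      show Polynomial.eval a pb = 0
      rw [hpb]
      simp [ha.2]
    refine le_trans (Finset.card_le_card hsub) ?_
    refine le_trans (Multiset.toFinset_card_le _) ?_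
    refine le_trans (Polynomial.card_roots' pb) ?_
    rw [hpb, Polynomial.natDegree_X_pow_sub_C]
  have hmain := Finset.card_le_mul_card_image s0 (q - 1) hfib
  rw [hcards0] at hmain
  by_contra hlt
  push_neg at hlt
  have hc : (s0.image (fun s : K => s ^ (q - 1))).card ≤ q := by omega
  have : (q - 1) * (s0.image (fun s : K => s ^ (q - 1))).card ≤ (q - 1) * q :=
    Nat.mul_le_mul_left _ hc
  obtain ⟨e, rfl⟩ : ∃ e, q = e + 2 := ⟨q - 2, by omega⟩
  have hsq : (e + 2) ^ 2 = (e + 2) * (e + 2) := sq (e + 2)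
  have h1 : (e + 2) * (e + 2) = e * e + 4 * e + 4 := by ring
  have h2 : (e + 2 - 1) * (e + 2) = e * e + 3 * e + 2 := by
    have : e + 2 - 1 = e + 1 := by omega
    rw [this]; ring
  omega




lemma dvd_of_vanish {Fq Ω : Type*} [Field Fq] [Field Ω] [Infinite Ω]
    (ι : Fq →+* Ω) (e : Fin 3 → Fq) (j : Fin 3) (hej : e j ≠ 0)
    (F : MvPolynomial (Fin 3) Fq)
    (hv : ∀ x : Fin 3 → Ω, (∑ i, ι (e i) * x i) = 0 → eval₂ ι x F = 0) :
    (∑ i, (MvPolynomial.C (e i) * X i : MvPolynomial (Fin 3) Fq)) ∣ F := by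
  classical
  set L : MvPolynomial (Fin 3) Fq := ∑ i, MvPolynomial.C (e i) * X i with hL
  set g : Fin 3 → MvPolynomial (Fin 3) Fq :=
    fun i => if i = j then X j - MvPolynomial.C (e j)⁻¹ * L else X i with hg
  have hmem : F - aeval g F ∈ Ideal.span {L} := by
    apply sub_aeval_mem
    intro i
    rcases eq_or_ne i j with rfl | hij
    · have hgi : g i = X i - MvPolynomial.C (e i)⁻¹ * L := by
        simp [hg]
      rw [hgi]
      have heq2 : X i - (X i - MvPolynomial.C (e i)⁻¹ * L) = MvPolynomial.C (e i)⁻¹ * L := by ring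
      rw [heq2]
      exact Ideal.mem_span_singleton.mpr ⟨MvPolynomial.C (e i)⁻¹, by ring⟩
    · have hgi : g i = X i := by simp [hg, hij]
      rw [hgi, sub_self]
      exact Ideal.zero_mem _
  have haev : aeval g F = 0 := by
    have hmapzero : MvPolynomial.map ι (aeval g F) = 0 := by
      apply MvPolynomial.funext
      intro x
      rw [map_zero, MvPolynomial.eval_map]
      have hring : (MvPolynomial.eval₂Hom ι x).comp
          (MvPolynomial.C : Fq →+* MvPolynomial (Fin 3) Fq) = ι := by
        ext r
        simp
      have hcomp : MvPolynomial.eval₂ ι x (aeval g F)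
          = MvPolynomial.eval₂ ι (fun i => MvPolynomial.eval₂ ι x (g i)) F := by
        rw [aeval_def, MvPolynomial.algebraMap_eq]
        have h2 := MvPolynomial.eval₂_comp_left (MvPolynomial.eval₂Hom ι x)
          (MvPolynomial.C : Fq →+* MvPolynomial (Fin 3) Fq) g F
        rw [hring] at h2
        simpa only [MvPolynomial.coe_eval₂Hom, Function.comp_def] using h2
      rw [hcomp]
      apply hv
      set T := ∑ i, ι (e i) * x i with hT
      have hx' : ∀ i, MvPolynomial.eval₂ ι x (g i)
          = x i - (if i = j then ι (e j)⁻¹ * T else 0) := by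
        intro i
        rcases eq_or_ne i j with rfl | hij
        · have hgi : g i = X i - MvPolynomial.C (e i)⁻¹ * L := by simp [hg]
          rw [hgi]
          simp only [eq_self_iff_true, if_true]
          rw [MvPolynomial.eval₂_sub, MvPolynomial.eval₂_X, MvPolynomial.eval₂_mul,
            MvPolynomial.eval₂_C, hL, MvPolynomial.eval₂_sum]
          simp only [MvPolynomial.eval₂_mul, MvPolynomial.eval₂_C, MvPolynomial.eval₂_X]
          rw [hT]
        · have hgi : g i = X i := by simp [hg, hij]
          rw [hgi, if_neg hij, MvPolynomial.eval₂_X, sub_zero]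
      have hsplit : ∀ i, ι (e i) * MvPolynomial.eval₂ ι x (g i)
          = ι (e i) * x i - (if i = j then ι (e j) * (ι (e j)⁻¹ * T) else 0) := by
        intro i
        rw [hx']
        rcases eq_or_ne i j with rfl | hij
        · simp only [eq_self_iff_true, if_true]; ring
        · simp only [if_neg hij]; ring
      rw [Finset.sum_congr rfl (fun i _ => hsplit i), Finset.sum_sub_distrib,
        Finset.sum_ite_eq' Finset.univ j (fun _ => ι (e j) * (ι (e j)⁻¹ * T))]
      simp only [Finset.mem_univ, if_pos]
      rw [map_inv₀, ← mul_assoc, mul_inv_cancel₀ (show ι (e j) ≠ 0 by simpa using hej),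
        one_mul, ← hT]
      ring
    exact MvPolynomial.map_injective ι ι.injective (by simpa using hmapzero)
  rw [haev, sub_zero] at hmem
  exact Ideal.mem_span_singleton.mp hmem


end PFC
open PFC in
/-- A plane-filling curve of degree `d ≤ q + 4` which is smooth at all `𝔽_q`-points and
has no `𝔽_q`-linear component is smooth at every `𝔽_{q²}`-point. -/
theorem smooth_at_Fq2_points_of_degree_le_q_add_four {Fq K : Type*} [Field Fq] [Fintype Fq]
    [Field K] [Fintype K] [Algebra Fq K]
    (q : ℕ) (hq : Fintype.card Fq = q) (hK : Fintype.card K = q ^ 2)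
    (d : ℕ) (hd : d ≤ q + 4)
    (F : MvPolynomial (Fin 3) Fq) (hhom : F.IsHomogeneous d)
    (hfill : ∀ a b c : Fq, (a, b, c) ≠ (0, 0, 0) → eval ![a, b, c] F = 0)
    (hsmooth : ∀ a b c : Fq, (a, b, c) ≠ (0, 0, 0) →
      ¬ (eval ![a, b, c] (pderiv 0 F) = 0 ∧
         eval ![a, b, c] (pderiv 1 F) = 0 ∧
         eval ![a, b, c] (pderiv 2 F) = 0))
    (hlin : ¬ ∃ L : MvPolynomial (Fin 3) Fq, L ≠ 0 ∧ L.IsHomogeneous 1 ∧ L ∣ F) :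
    ∀ a b c : K, (a, b, c) ≠ (0, 0, 0) →
      ¬ (aeval ![a, b, c] F = 0 ∧
         aeval ![a, b, c] (pderiv 0 F) = 0 ∧
         aeval ![a, b, c] (pderiv 1 F) = 0 ∧
         aeval ![a, b, c] (pderiv 2 F) = 0) := by
  classical
  intro a b c hne
  rintro ⟨h0, h1, h2, h3⟩
  set φ : Fq →+* K := (algebraMap Fq K : Fq →+* K) with hφdef
  have hq2 : 2 ≤ q := hq ▸ Fintype.one_lt_card
  -- F is nonzero
  have hF0 : F ≠ 0 := by
    rintro rfl
    exact hsmooth 1 0 0 (by simp) (by simp)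
  -- dispose of degrees 0 and 1
  rcases Nat.lt_or_ge d 2 with hdlt | hd2
  · interval_cases d
    · -- degree 0
      have hC : ∀ m : Fin 3 →₀ ℕ, m ≠ 0 → coeff m F = 0 := by
        intro m hm
        by_contra hcm
        have hw := hhom hcm
        rw [show (Finsupp.weight 1 : (_ →₀ ℕ) →+ ℕ) = Finsupp.degree from Finsupp.degree_eq_weight_one.symm] at hw
        exact hm ((Finsupp.degree_eq_zero_iff m).mp hw)
      have hCeq : F = MvPolynomial.C (coeff 0 F) := by
        ext m
        rw [MvPolynomial.coeff_C]
        rcases eq_or_ne m 0 with rfl | hm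
        · rw [if_pos rfl]
        · rw [if_neg (Ne.symm hm), hC m hm]
      have := hfill 1 0 0 (by simp)
      rw [hCeq] at this hF0
      rw [MvPolynomial.eval_C] at this
      rw [this] at hF0
      exact hF0 (map_zero _)
    · -- degree 1
      exact hlin ⟨F, hF0, hhom, dvd_rfl⟩
  -- Frobenius
  haveI hCharFq : CharP Fq (ringChar Fq) := ringChar.charP Fq
  obtain ⟨nn, hpp, hcardpn⟩ := FiniteField.card Fq (ringChar Fq)
  haveI : Fact (Nat.Prime (ringChar Fq)) := ⟨hpp⟩
  haveI hCharK : CharP K (ringChar Fq) :=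
    charP_of_injective_algebraMap (algebraMap Fq K).injective (ringChar Fq)
  haveI : ExpChar K (ringChar Fq) := ExpChar.prime hpp
  set ψ : K →+* K := iterateFrobenius K (ringChar Fq) nn with hψdef
  have hψ : ∀ x : K, ψ x = x ^ q := by
    intro x
    rw [hψdef, iterateFrobenius_def, show (ringChar Fq) ^ (nn : ℕ) = q by rw [← hq, hcardpn]]
  have hψφ : ∀ α : Fq, ψ (φ α) = φ α := by
    intro α
    rw [hψ, ← map_pow, show α ^ q = α by rw [← hq]; exact FiniteField.pow_card α]
  have hqq : ∀ x : K, (x ^ q) ^ q = x := by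
    intro x
    rw [← pow_mul, show q * q = q ^ 2 by ring, ← hK]
    exact FiniteField.pow_card x
  have frob_aeval : ∀ (G : MvPolynomial (Fin 3) Fq) (v : Fin 3 → K),
      ψ (aeval v G) = aeval (fun i => ψ (v i)) G := by
    intro G v
    rw [aeval_def, aeval_def]
    have h2 := MvPolynomial.eval₂_comp_left ψ (algebraMap Fq K) v G
    have hring : ψ.comp (algebraMap Fq K) = algebraMap Fq K := RingHom.ext hψφ
    rw [hring] at h2
    exact h2
  -- the point and its conjugate
  set P : Fin 3 → K := ![a, b, c] with hPdef
  set Pq : Fin 3 → K := fun i => P i ^ q with hPqdef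
  have hPqi : ∀ i, Pq i = P i ^ q := fun i => rfl
  have hψP : ∀ i, ψ (P i) = Pq i := fun i => by rw [hψ, hPqi]
  have hψPq : ∀ i, ψ (Pq i) = P i := fun i => by rw [hψ, hPqi]; exact hqq (P i)
  have hFP : aeval P F = 0 := h0
  have hDP : ∀ i, aeval P (pderiv i F) = 0 := by
    intro i
    fin_cases i
    · exact h1
    · exact h2
    · exact h3
  have hFPq : aeval Pq F = 0 := by
    have := frob_aeval F P
    rw [hFP, map_zero] at this
    rw [show Pq = fun i => ψ (P i) from funext fun i => (hψP i).symm]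
    exact this.symm
  have hDPq : ∀ i, aeval Pq (pderiv i F) = 0 := by
    intro i
    have := frob_aeval (pderiv i F) P
    rw [hDP i, map_zero] at this
    rw [show Pq = fun i => ψ (P i) from funext fun i => (hψP i).symm]
    exact this.symm
  -- the cross product of P with its conjugate
  set w : Fin 3 → K :=
    ![P 1 * Pq 2 - P 2 * Pq 1, P 2 * Pq 0 - P 0 * Pq 2, P 0 * Pq 1 - P 1 * Pq 0] with hwdef
  have hw0 : w 0 = P 1 * Pq 2 - P 2 * Pq 1 := rfl
  have hw1 : w 1 = P 2 * Pq 0 - P 0 * Pq 2 := rfl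
  have hw2 : w 2 = P 0 * Pq 1 - P 1 * Pq 0 := rfl
  have veceta : ∀ u : Fin 3 → Fq, ![u 0, u 1, u 2] = u := by
    intro u; funext i; fin_cases i <;> rfl
  by_cases hwz : ∀ i, w i = 0
  case pos =>
    -- CASE A : the point is proportional to a rational point
    have caseA : ∀ (lam : K) (u : Fin 3 → Fq), lam ≠ 0 → (∀ i, P i = lam * φ (u i)) →
        (u 0 ≠ 0 ∨ u 1 ≠ 0 ∨ u 2 ≠ 0) → False := by
      intro lam u hlam hPu hune
      have hPfun : P = fun j => lam * φ (u j) := funext hPu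
      have hkey : ∀ i, eval u (pderiv i F) = 0 := by
        intro i
        have hhom' := pderiv_isHomogeneous hhom i
        have hevφ : eval₂ φ (fun j => φ (u j)) (pderiv i F) = φ (eval u (pderiv i F)) := by
          have h2 := MvPolynomial.eval₂_comp_left φ (RingHom.id Fq) u (pderiv i F)
          rw [RingHom.comp_id, MvPolynomial.eval₂_id] at h2
          exact h2.symm
        have e1 : eval₂ φ (fun j => lam * φ (u j)) (pderiv i F)
            = lam ^ (d - 1) * φ (eval u (pderiv i F)) := by
          rw [eval₂_mul_scale φ hhom' lam (fun j => φ (u j)), hevφ]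
        have e2 : eval₂ φ (fun j => lam * φ (u j)) (pderiv i F) = 0 := by
          rw [← hPfun, ← aeval_def]
          exact hDP i
        rw [e1] at e2
        rcases mul_eq_zero.mp e2 with hz | hz
        · exact absurd hz (pow_ne_zero _ hlam)
        · exact (map_eq_zero φ).mp hz
      have hune' : (u 0, u 1, u 2) ≠ (0, 0, 0) := by
        intro heq
        have h3' : u 0 = 0 ∧ u 1 = 0 ∧ u 2 = 0 := by simpa [Prod.ext_iff] using heq
        rcases hune with h | h | h
        · exact h h3'.1
        · exact h h3'.2.1
        · exact h h3'.2.2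
      refine hsmooth (u 0) (u 1) (u 2) hune' ?_
      rw [veceta u]
      exact ⟨hkey 0, hkey 1, hkey 2⟩
    have hPa : P 0 = a := rfl
    have hPb : P 1 = b := rfl
    have hPc : P 2 = c := rfl
    have habc : a ≠ 0 ∨ b ≠ 0 ∨ c ≠ 0 := by
      by_contra hcon
      push_neg at hcon
      exact hne (by simp [hcon.1, hcon.2.1, hcon.2.2])
    have hm0 : b * c ^ q - c * b ^ q = 0 := by
      have h := hwz 0; rw [hw0, hPqi 1, hPqi 2, hPb, hPc] at h; exact h
    have hm1 : c * a ^ q - a * c ^ q = 0 := by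
      have h := hwz 1; rw [hw1, hPqi 0, hPqi 2, hPa, hPc] at h; exact h
    have hm2 : a * b ^ q - b * a ^ q = 0 := by
      have h := hwz 2; rw [hw2, hPqi 0, hPqi 1, hPa, hPb] at h; exact h
    have ratfix : ∀ x y : K, y ≠ 0 → x * y ^ q - y * x ^ q = 0 → ∃ t : Fq, φ t = x * y⁻¹ := by
      intro x y hy hrel
      apply fixed_of_pow hq
      have hyq : y ^ q ≠ 0 := pow_ne_zero _ hy
      rw [mul_pow, inv_pow]
      have hgoal : x ^ q * (y ^ q)⁻¹ = x * y⁻¹ := by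
        field_simp
        linear_combination -hrel
      exact hgoal
    rcases habc with ha | hb | hc
    · obtain ⟨β, hβ⟩ := ratfix b a ha (by linear_combination -hm2)
      obtain ⟨γ, hγ⟩ := ratfix c a ha hm1
      refine caseA a ![1, β, γ] ha ?_ (Or.inl (by simp))
      intro i
      fin_cases i
      · show a = a * φ 1
        rw [map_one, mul_one]
      · show b = a * φ (![1, β, γ] 1)
        simp only [Matrix.cons_val_one, Matrix.head_cons, Matrix.cons_val_zero]
        rw [hβ]
        field_simp
      · show c = a * φ (![1, β, γ] 2)
        simp only [Matrix.cons_val_two, Matrix.tail_cons, Matrix.head_cons]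
        rw [hγ]
        field_simp
    · obtain ⟨α, hα⟩ := ratfix a b hb (by linear_combination hm2)
      obtain ⟨γ, hγ⟩ := ratfix c b hb (by linear_combination -hm0)
      refine caseA b ![α, 1, γ] hb ?_ (Or.inr (Or.inl (by simp)))
      intro i
      fin_cases i
      · show a = b * φ (![α, 1, γ] 0)
        simp only [Matrix.cons_val_zero]
        rw [hα]
        field_simp
      · show b = b * φ 1
        rw [map_one, mul_one]
      · show c = b * φ (![α, 1, γ] 2)
        simp only [Matrix.cons_val_two, Matrix.tail_cons, Matrix.head_cons]
        rw [hγ]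
        field_simp
    · obtain ⟨α, hα⟩ := ratfix a c hc (by linear_combination -hm1)
      obtain ⟨β, hβ⟩ := ratfix b c hc (by linear_combination hm0)
      refine caseA c ![α, β, 1] hc ?_ (Or.inr (Or.inr (by simp)))
      intro i
      fin_cases i
      · show a = c * φ (![α, β, 1] 0)
        simp only [Matrix.cons_val_zero]
        rw [hα]
        field_simp
      · show b = c * φ (![α, β, 1] 1)
        simp only [Matrix.cons_val_one, Matrix.head_cons, Matrix.cons_val_zero]
        rw [hβ]
        field_simp
      · show c = c * φ 1
        rw [map_one, mul_one]
  case neg =>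
    -- CASE B : the main case
    push_neg at hwz
    obtain ⟨j, hwj⟩ := hwz
    set h : Polynomial K := lsub φ P Pq F with hhdef
    have hkey := lsub_coeff_zero_one φ P Pq F
    have hkey' := lsub_coeff_zero_one φ Pq P F
    have hc0 : h.coeff 0 = 0 := by
      rw [hhdef]
      rw [hkey.1, ← aeval_def]
      exact hFP
    have hc1 : h.coeff 1 = 0 := by
      rw [hhdef, hkey.2]
      apply Finset.sum_eq_zero
      intro i _
      rw [← aeval_def, hDP i, mul_zero]
    have hrefl := reflect_lsub φ P Pq hhom
    have hcd : h.coeff d = 0 := by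
      have e0 : (lsub φ Pq P F).coeff 0 = 0 := by
        rw [hkey'.1, ← aeval_def]
        exact hFPq
      rw [← hrefl, Polynomial.coeff_reflect, Polynomial.revAt_le (Nat.zero_le d),
        Nat.sub_zero] at e0
      rw [hhdef]
      exact e0
    have hcd1 : h.coeff (d - 1) = 0 := by
      have e1 : (lsub φ Pq P F).coeff 1 = 0 := by
        rw [hkey'.2]
        apply Finset.sum_eq_zero
        intro i _
        rw [← aeval_def, hDPq i, mul_zero]
      rw [← hrefl, Polynomial.coeff_reflect, Polynomial.revAt_le (by omega : 1 ≤ d)] at e1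
      rw [hhdef]
      exact e1
    have hdeg : h.natDegree ≤ d - 2 := by
      rw [Polynomial.natDegree_le_iff_coeff_eq_zero]
      intro N hN
      rcases lt_trichotomy N d with hNd | rfl | hNd
      · have hN1 : N = d - 1 := by omega
        rw [hN1]
        exact hcd1
      · exact hcd
      · refine Polynomial.coeff_eq_zero_of_natDegree_lt (lt_of_le_of_lt ?_ hNd)
        rw [hhdef]
        exact natDegree_lsub_le φ P Pq hhom
    have hevalh : ∀ u : K, h.eval u = eval₂ φ (fun i => P i + Pq i * u) F := by
      intro u
      have h2 := MvPolynomial.eval₂_comp_left (Polynomial.evalRingHom u)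
        (Polynomial.C.comp φ)
        (fun i => Polynomial.C (P i) + Polynomial.C (Pq i) * Polynomial.X) F
      have hring : (Polynomial.evalRingHom u).comp (Polynomial.C.comp φ) = φ := by
        ext r; simp
      rw [hring] at h2
      have hsub : ((Polynomial.evalRingHom u : Polynomial K →+* K) ∘
          fun i => Polynomial.C (P i) + Polynomial.C (Pq i) * Polynomial.X)
          = fun i => P i + Pq i * u := by
        funext i; simp
      rw [hsub] at h2
      exact h2
    have hrootpow : ∀ s : K, s ≠ 0 → h.eval (s ^ (q - 1)) = 0 := by
      intro s hs
      have hqs : s ^ (q - 1) * s = s ^ q := by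
        rw [← pow_succ]
        congr 1
        omega
      have hQfun : (fun i => s * (P i + Pq i * s ^ (q - 1)))
          = fun i => s * P i + s ^ q * Pq i := by
        funext i
        linear_combination (Pq i) * hqs
      have hscale := eval₂_mul_scale φ hhom s (fun i => P i + Pq i * s ^ (q - 1))
      rw [hQfun] at hscale
      set Q : Fin 3 → K := fun i => s * P i + s ^ q * Pq i with hQdef
      have hfix : ∀ i, (Q i) ^ q = Q i := by
        intro i
        rw [← hψ, hQdef]
        simp only [map_add, map_mul, map_pow]
        rw [hψP i, hψPq i, hψ s, hqq s]
        ring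
      have hchoice : ∀ i, ∃ t : Fq, φ t = Q i := fun i => fixed_of_pow hq (hfix i)
      choose α hα using hchoice
      have hQne : (α 0, α 1, α 2) ≠ (0, 0, 0) := by
        intro heq
        have h3' : α 0 = 0 ∧ α 1 = 0 ∧ α 2 = 0 := by simpa [Prod.ext_iff] using heq
        have hαz : ∀ i, α i = 0 := by
          intro i
          fin_cases i
          · exact h3'.1
          · exact h3'.2.1
          · exact h3'.2.2
        have hQ0 : ∀ i, s * P i + s ^ q * Pq i = 0 := by
          intro i
          rw [show s * P i + s ^ q * Pq i = Q i from rfl, ← hα i, hαz i, map_zero]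
        have hwzz : ∀ k, s * w k = 0 := by
          intro k
          fin_cases k
          · show s * (P 1 * Pq 2 - P 2 * Pq 1) = 0
            linear_combination (Pq 2) * (hQ0 1) - (Pq 1) * (hQ0 2)
          · show s * (P 2 * Pq 0 - P 0 * Pq 2) = 0
            linear_combination (Pq 0) * (hQ0 2) - (Pq 2) * (hQ0 0)
          · show s * (P 0 * Pq 1 - P 1 * Pq 0) = 0
            linear_combination (Pq 1) * (hQ0 0) - (Pq 0) * (hQ0 1)
        apply hwj
        rcases mul_eq_zero.mp (hwzz j) with h' | h'
        · exact absurd h' hs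
        · exact h'
      have hfillQ : eval₂ φ Q F = 0 := by
        have h2 := MvPolynomial.eval₂_comp_left φ (RingHom.id Fq) α F
        rw [RingHom.comp_id, MvPolynomial.eval₂_id] at h2
        have hQφ : eval₂ φ Q F = φ (eval α F) := by
          rw [show Q = fun i => φ (α i) from funext fun i => (hα i).symm]
          exact h2.symm
        have hf := hfill (α 0) (α 1) (α 2) hQne
        rw [veceta α] at hf
        rw [hQφ, hf, map_zero]
      rw [hfillQ] at hscale
      have hev0 : eval₂ φ (fun i => P i + Pq i * s ^ (q - 1)) F = 0 := by
        rcases mul_eq_zero.mp hscale.symm with h' | h'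
        · exact absurd h' (pow_ne_zero _ hs)
        · exact h'
      rw [hevalh]
      exact hev0
    have hzero : h = 0 := by
      by_contra hh0
      have hX2 : (Polynomial.X : Polynomial K) ^ 2 ∣ h := by
        rw [Polynomial.X_pow_dvd_iff]
        intro k hk
        interval_cases k
        · exact hc0
        · exact hc1
      have hcount0 : 2 ≤ h.roots.count 0 := by
        rw [Polynomial.count_roots, Polynomial.le_rootMultiplicity_iff hh0]
        simpa using hX2
      set Sset : Finset K :=
        (Finset.univ.filter (fun s : K => s ≠ 0)).image (fun s => s ^ (q - 1)) with hSdef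
      have hScard : q + 1 ≤ Sset.card := card_powers hq2 hK
      have hSsub : Sset ⊆ h.roots.toFinset := by
        intro u hu
        rw [hSdef, Finset.mem_image] at hu
        obtain ⟨s, hsmem, rfl⟩ := hu
        rw [Finset.mem_filter] at hsmem
        rw [Multiset.mem_toFinset, Polynomial.mem_roots hh0]
        exact hrootpow s hsmem.2
      have hS0 : (0 : K) ∉ Sset := by
        rw [hSdef, Finset.mem_image]
        rintro ⟨s, hsmem, hs0⟩
        rw [Finset.mem_filter] at hsmem
        exact (pow_ne_zero _ hsmem.2) hs0
      have h0mem : (0 : K) ∈ h.roots.toFinset := by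
        rw [Multiset.mem_toFinset]
        have hpos : 0 < h.roots.count 0 := by omega
        exact Multiset.count_pos.mp hpos
      have hsubun : insert (0 : K) Sset ⊆ h.roots.toFinset := by
        intro x hx
        rcases Finset.mem_insert.mp hx with rfl | hx
        · exact h0mem
        · exact hSsub hx
      have hsum := Multiset.toFinset_sum_count_eq h.roots
      have hle1 : ∑ x ∈ insert (0:K) Sset, h.roots.count x ≤ Multiset.card h.roots := by
        rw [← hsum]
        exact Finset.sum_le_sum_of_subset hsubun
      have hge : q + 3 ≤ ∑ x ∈ insert (0:K) Sset, h.roots.count x := by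
        rw [Finset.sum_insert hS0]
        have hone : ∀ x ∈ Sset, 1 ≤ h.roots.count x := by
          intro x hx
          exact Multiset.one_le_count_iff_mem.mpr (Multiset.mem_toFinset.mp (hSsub hx))
        have hcardle : Sset.card ≤ ∑ x ∈ Sset, h.roots.count x := by
          calc Sset.card = ∑ _x ∈ Sset, 1 := by rw [Finset.card_eq_sum_ones]
            _ ≤ _ := Finset.sum_le_sum hone
        omega
      have hcr : Multiset.card h.roots ≤ h.natDegree := Polynomial.card_roots' h
      omega
    -- conclusion : F vanishes on a plane defined over Fq, contradiction with hlin
    set Ω : Type _ := AlgebraicClosure K with hΩdef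
    set ιK : K →+* Ω := (algebraMap K Ω : K →+* Ω) with hιKdef
    set ι : Fq →+* Ω := ιK.comp φ with hιdef
    have hzΩ : ∀ u : Ω, eval₂ ι (fun i => ιK (P i) + ιK (Pq i) * u) F = 0 := by
      intro u
      have h2 := MvPolynomial.eval₂_comp_left (Polynomial.eval₂RingHom ιK u)
        (Polynomial.C.comp φ)
        (fun i => Polynomial.C (P i) + Polynomial.C (Pq i) * Polynomial.X) F
      have hring : (Polynomial.eval₂RingHom ιK u).comp (Polynomial.C.comp φ) = ι := by
        ext r
        simp [hιdef]
      rw [hring] at h2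
      have hlhs : (Polynomial.eval₂RingHom ιK u) (eval₂ (Polynomial.C.comp φ)
          (fun i => Polynomial.C (P i) + Polynomial.C (Pq i) * Polynomial.X) F) = 0 := by
        rw [show eval₂ (Polynomial.C.comp φ)
          (fun i => Polynomial.C (P i) + Polynomial.C (Pq i) * Polynomial.X) F = h from rfl]
        rw [hzero, map_zero]
      rw [hlhs] at h2
      have hsub : ((Polynomial.eval₂RingHom ιK u : Polynomial K →+* Ω) ∘
          fun i => Polynomial.C (P i) + Polynomial.C (Pq i) * Polynomial.X)
          = fun i => ιK (P i) + ιK (Pq i) * u := by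
        funext i
        simp
      rw [hsub] at h2
      exact h2.symm
    have haevΩ : eval₂ ι (fun i => ιK (Pq i)) F = 0 := by
      have h2 := MvPolynomial.eval₂_comp_left ιK φ Pq F
      rw [show ιK.comp φ = ι from rfl] at h2
      rw [← aeval_def, hFPq, map_zero] at h2
      exact h2.symm
    have hplane : ∀ al be : Ω, eval₂ ι (fun i => al * ιK (P i) + be * ιK (Pq i)) F = 0 := by
      intro al be
      rcases eq_or_ne al 0 with rfl | hal
      · have hfun : (fun i => (0:Ω) * ιK (P i) + be * ιK (Pq i))
            = fun i => be * ιK (Pq i) := by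
          funext i; ring
        rw [hfun, eval₂_mul_scale ι hhom be (fun i => ιK (Pq i)), haevΩ, mul_zero]
      · have hinv := mul_inv_cancel₀ hal
        have hfun : (fun i => al * ιK (P i) + be * ιK (Pq i))
            = fun i => al * (ιK (P i) + ιK (Pq i) * (al⁻¹ * be)) := by
          funext i
          linear_combination (-(ιK (Pq i)) * be) * hinv
        rw [hfun, eval₂_mul_scale ι hhom al _, hzΩ (al⁻¹ * be), mul_zero]
    -- normalizing w to a rational linear form
    have hψw : ∀ i, ψ (w i) = - w i := by
      intro i
      fin_cases i
      · show ψ (P 1 * Pq 2 - P 2 * Pq 1) = -(P 1 * Pq 2 - P 2 * Pq 1)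
        rw [map_sub, map_mul, map_mul, hψP, hψP, hψPq, hψPq]; ring
      · show ψ (P 2 * Pq 0 - P 0 * Pq 2) = -(P 2 * Pq 0 - P 0 * Pq 2)
        rw [map_sub, map_mul, map_mul, hψP, hψP, hψPq, hψPq]; ring
      · show ψ (P 0 * Pq 1 - P 1 * Pq 0) = -(P 0 * Pq 1 - P 1 * Pq 0)
        rw [map_sub, map_mul, map_mul, hψP, hψP, hψPq, hψPq]; ring
    have hefix : ∀ i, ((w j)⁻¹ * w i) ^ q = (w j)⁻¹ * w i := by
      intro i
      rw [← hψ, map_mul, map_inv₀, hψw, hψw, inv_neg, neg_mul_neg]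
    have heex : ∀ i, ∃ t : Fq, φ t = (w j)⁻¹ * w i := fun i => fixed_of_pow hq (hefix i)
    choose e he using heex
    have hej : e j ≠ 0 := by
      intro h0'
      have hh := he j
      rw [h0', map_zero, inv_mul_cancel₀ hwj] at hh
      exact zero_ne_one hh
    have hwe : ∀ i, w i = w j * φ (e i) := by
      intro i
      rw [he i, ← mul_assoc, mul_inv_cancel₀ hwj, one_mul]
    set L : MvPolynomial (Fin 3) Fq := ∑ i, MvPolynomial.C (e i) * X i with hLdef
    have hLhom : L.IsHomogeneous 1 := by
      apply MvPolynomial.IsHomogeneous.sum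
      intro i _
      exact (isHomogeneous_X Fq i).C_mul (e i)
    have hLne : L ≠ 0 := by
      intro hL0
      have hev : eval (fun k => if k = j then (1:Fq) else 0) L = e j := by
        rw [hLdef, map_sum]
        simp [Finset.sum_ite_eq']
      rw [hL0, map_zero] at hev
      exact hej hev.symm
    have hLdvd : L ∣ F := by
      rw [hLdef]
      apply dvd_of_vanish ι e j hej F
      intro x hx
      have hWx : ∑ i, ιK (w i) * x i = 0 := by
        have hterm : ∀ i, ιK (w i) * x i = ιK (w j) * (ι (e i) * x i) := by
          intro i
          rw [hwe i, map_mul]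
          rw [show ι (e i) = ιK (φ (e i)) from rfl]
          ring
        rw [Finset.sum_congr rfl (fun i _ => hterm i), ← Finset.mul_sum, hx, mul_zero]
      have hWexp : (ιK (P 1) * ιK (Pq 2) - ιK (P 2) * ιK (Pq 1)) * x 0
          + (ιK (P 2) * ιK (Pq 0) - ιK (P 0) * ιK (Pq 2)) * x 1
          + (ιK (P 0) * ιK (Pq 1) - ιK (P 1) * ιK (Pq 0)) * x 2 = 0 := by
        have e0 : ιK (w 0) = ιK (P 1) * ιK (Pq 2) - ιK (P 2) * ιK (Pq 1) := by
          rw [hw0]; rw [map_sub, map_mul, map_mul]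
        have e1 : ιK (w 1) = ιK (P 2) * ιK (Pq 0) - ιK (P 0) * ιK (Pq 2) := by
          rw [hw1]; rw [map_sub, map_mul, map_mul]
        have e2 : ιK (w 2) = ιK (P 0) * ιK (Pq 1) - ιK (P 1) * ιK (Pq 0) := by
          rw [hw2]; rw [map_sub, map_mul, map_mul]
        rw [← e0, ← e1, ← e2]
        rw [← Fin.sum_univ_three (fun i => ιK (w i) * x i)]
        exact hWx
      have hxk : ∃ A B : Ω, ∀ k, ιK (w j) * x k = A * ιK (P k) + B * ιK (Pq k) := by
        fin_cases j
        · obtain ⟨A, hA⟩ : ∃ A : Ω, A = x 1 * ιK (Pq 2) - x 2 * ιK (Pq 1) := ⟨_, rfl⟩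
          obtain ⟨B, hB⟩ : ∃ B : Ω, B = ιK (P 1) * x 2 - ιK (P 2) * x 1 := ⟨_, rfl⟩
          have hWj : ιK (w 0) = ιK (P 1) * ιK (Pq 2) - ιK (P 2) * ιK (Pq 1) := by
            rw [hw0, map_sub, map_mul, map_mul]
          have g0 : ιK (w 0) * x 0 = A * ιK (P 0) + B * ιK (Pq 0) := by
            rw [hA, hB, hWj]; linear_combination hWexp
          have g1 : ιK (w 0) * x 1 = A * ιK (P 1) + B * ιK (Pq 1) := by
            rw [hA, hB, hWj]; ring
          have g2 : ιK (w 0) * x 2 = A * ιK (P 2) + B * ιK (Pq 2) := by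
            rw [hA, hB, hWj]; ring
          refine ⟨A, B, ?_⟩
          intro k
          fin_cases k
          · exact g0
          · exact g1
          · exact g2
        · obtain ⟨A, hA⟩ : ∃ A : Ω, A = x 2 * ιK (Pq 0) - x 0 * ιK (Pq 2) := ⟨_, rfl⟩
          obtain ⟨B, hB⟩ : ∃ B : Ω, B = ιK (P 2) * x 0 - ιK (P 0) * x 2 := ⟨_, rfl⟩
          have hWj : ιK (w 1) = ιK (P 2) * ιK (Pq 0) - ιK (P 0) * ιK (Pq 2) := by
            rw [hw1, map_sub, map_mul, map_mul]
          have g0 : ιK (w 1) * x 0 = A * ιK (P 0) + B * ιK (Pq 0) := by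
            rw [hA, hB, hWj]; ring
          have g1 : ιK (w 1) * x 1 = A * ιK (P 1) + B * ιK (Pq 1) := by
            rw [hA, hB, hWj]; linear_combination hWexp
          have g2 : ιK (w 1) * x 2 = A * ιK (P 2) + B * ιK (Pq 2) := by
            rw [hA, hB, hWj]; ring
          refine ⟨A, B, ?_⟩
          intro k
          fin_cases k
          · exact g0
          · exact g1
          · exact g2
        · obtain ⟨A, hA⟩ : ∃ A : Ω, A = x 0 * ιK (Pq 1) - x 1 * ιK (Pq 0) := ⟨_, rfl⟩
          obtain ⟨B, hB⟩ : ∃ B : Ω, B = ιK (P 0) * x 1 - ιK (P 1) * x 0 := ⟨_, rfl⟩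
          have hWj : ιK (w 2) = ιK (P 0) * ιK (Pq 1) - ιK (P 1) * ιK (Pq 0) := by
            rw [hw2, map_sub, map_mul, map_mul]
          have g0 : ιK (w 2) * x 0 = A * ιK (P 0) + B * ιK (Pq 0) := by
            rw [hA, hB, hWj]; ring
          have g1 : ιK (w 2) * x 1 = A * ιK (P 1) + B * ιK (Pq 1) := by
            rw [hA, hB, hWj]; ring
          have g2 : ιK (w 2) * x 2 = A * ιK (P 2) + B * ιK (Pq 2) := by
            rw [hA, hB, hWj]; linear_combination hWexp
          refine ⟨A, B, ?_⟩
          intro k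
          fin_cases k
          · exact g0
          · exact g1
          · exact g2
      obtain ⟨A, B, hsolve⟩ := hxk
      have hscale2 := eval₂_mul_scale ι hhom (ιK (w j)) x
      have hfuneq : (fun k => ιK (w j) * x k) = fun k => A * ιK (P k) + B * ιK (Pq k) :=
        funext hsolve
      rw [hfuneq, hplane A B] at hscale2
      have hwjΩ : ιK (w j) ≠ 0 := by
        simpa using hwj
      rcases mul_eq_zero.mp hscale2.symm with h' | h'
      · exact absurd h' (pow_ne_zero _ hwjΩ)
      · exact h'
    exact hlin ⟨L, hLne, hLhom, hLdvd⟩
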